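/- Let R = (r_{pq}) ∈ ℝ^{n×n} be an invertible upper triangular matrix. Then for all indices i < j, |r_{ij}| ≤ ‖R⁻¹ − Rᵀ‖ ≤ ‖I − RᵀR‖ · ‖R⁻¹‖. -/

import Mathlib

open Matrix

noncomputable def specNorm {m n : ℕ} (A : Matrix (Fin m) (Fin n) ℝ) : ℝ :=
  ‖LinearMap.toContinuousLinearMap (Matrix.toEuclideanLin A)‖

noncomputable def frobNorm {m n : ℕ} (A : Matrix (Fin m) (Fin n) ℝ) : ℝ :=
  Real.sqrt (∑ p, ∑ q, (A p q) ^ 2)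

def offDiag {n : ℕ} (A : Matrix (Fin n) (Fin n) ℝ) : Matrix (Fin n) (Fin n) ℝ :=
  fun p q => if p = q then 0 else A p q

def jacobiRot {n : ℕ} (i j : Fin n) (c s : ℝ) : Matrix (Fin n) (Fin n) ℝ :=
  fun p q =>
    if p = i ∧ q = i then c
    else if p = j ∧ q = j then c
    else if p = i ∧ q = j then s
    else if p = j ∧ q = i then -s
    else if p = q then 1 else 0

open Classical in
noncomputable def eigValsDesc {n : ℕ} (A : Matrix (Fin n) (Fin n) ℝ) : Fin n → ℝ :=
  if hA : A.IsHermitian then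
    fun k => (hA.eigenvalues ∘ Tuple.sort hA.eigenvalues) k.rev
  else 0

noncomputable def singValsDesc {m n : ℕ} (A : Matrix (Fin m) (Fin n) ℝ) : Fin n → ℝ :=
  fun k => Real.sqrt (eigValsDesc (Aᵀ * A) k)
lemma specNorm_mul_le {n : ℕ} (A B : Matrix (Fin n) (Fin n) ℝ) :
    specNorm (A * B) ≤ specNorm A * specNorm B := by
  unfold specNorm
  have := (LinearMap.toContinuousLinearMap (Matrix.toEuclideanLin A)).opNorm_comp_le
    (LinearMap.toContinuousLinearMap (Matrix.toEuclideanLin B))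
  convert this using 2
  ext1 x
  simp [Matrix.toEuclideanLin_apply, Matrix.mulVec_mulVec]

lemma entry_le_specNorm {n : ℕ} (A : Matrix (Fin n) (Fin n) ℝ) (p q : Fin n) :
    |A p q| ≤ specNorm A := by
  set f := LinearMap.toContinuousLinearMap (Matrix.toEuclideanLin A)
  set e : EuclideanSpace ℝ (Fin n) := EuclideanSpace.single q 1
  have he : ‖e‖ = 1 := by simp [e]
  have h1 : f e p = A p q := by
    show Matrix.toEuclideanLin A e p = A p q
    simp [Matrix.toEuclideanLin_apply, Matrix.mulVec, dotProduct, e,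
      EuclideanSpace.single_apply]
  have h2 : |f e p| ≤ ‖f e‖ := by
    have := EuclideanSpace.norm_eq (f e)
    rw [this]
    rw [← Real.sqrt_sq (abs_nonneg (f e p))]
    apply Real.sqrt_le_sqrt
    rw [sq_abs]
    have : ‖f e p‖ ^ 2 = (f e p) ^ 2 := by simp [sq_abs]
    calc (f e p)^2 = ‖f e p‖^2 := by rw [this]
    _ ≤ ∑ i, ‖f e i‖ ^ 2 :=
        Finset.single_le_sum (f := fun i => ‖f e i‖ ^ 2) (fun i _ => by positivity)
          (Finset.mem_univ p)
  calc |A p q| = |f e p| := by rw [h1]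
    _ ≤ ‖f e‖ := h2
    _ ≤ ‖f‖ * ‖e‖ := f.le_opNorm e
    _ = specNorm A := by rw [he, mul_one]; rfl


/-- Strictly upper triangular entries of an invertible upper triangular
matrix are bounded by `‖R⁻¹ - Rᵀ‖ ≤ ‖I - RᵀR‖ ‖R⁻¹‖`. -/
theorem triangular_offdiag_bounds {n : ℕ} (R : Matrix (Fin n) (Fin n) ℝ)
    (htri : ∀ p q : Fin n, q < p → R p q = 0)
    (hR : IsUnit R) :
    ∀ i j : Fin n, i < j →
      |R i j| ≤ specNorm (R⁻¹ - Rᵀ) ∧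
      specNorm (R⁻¹ - Rᵀ) ≤ specNorm (1 - Rᵀ * R) * specNorm R⁻¹ := by
  intro i j hij
  have : Invertible R := hR.invertible
  have hbt : R.BlockTriangular id := fun p q h => htri p q h
  have hinv : R⁻¹.BlockTriangular id := blockTriangular_inv_of_blockTriangular hbt
  constructor
  · have h0 : R⁻¹ j i = 0 := hinv hij
    have := entry_le_specNorm (R⁻¹ - Rᵀ) j i
    simpa [h0, sub_eq_add_neg, Matrix.sub_apply, transpose_apply] using this
  · have key : R⁻¹ - Rᵀ = (1 - Rᵀ * R) * R⁻¹ := by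
      rw [Matrix.sub_mul, one_mul, Matrix.mul_assoc, Matrix.mul_nonsing_inv _ (isUnit_iff_isUnit_det R |>.mp hR), Matrix.mul_one]
    rw [key]
    exact specNorm_mul_le _ _
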